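/- For a (C,C')-controlled Bessel K-operator sequence {T_i}_{i∈I} with C, C' commuting with each other and with T_i*T_i for all i, the frame operator S_{(C,C')} defined by S_{(C,C')}x = Σ_i C' T_i* T_i C x is a positive, bounded, self-adjoint operator on H. -/

import Mathlib

set_option linter.unusedSectionVars false
set_option maxHeartbeats 1000000


open scoped RightActions

/-- The Mathlib (Dec 2024) notion of a Hilbert C⋆-module: a *right* `A`-module with
`A`-valued inner product, `⟪x, y <• a⟫ = ⟪x, y⟫ * a` (Mathlib has since switched to left
modules, so the old definition is reproduced here). -/
class CStarModuleRight (A E : Type*) [NonUnitalSemiring A] [StarRing A]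
    [Module ℂ A] [AddCommGroup E] [Module ℂ E] [PartialOrder A] [SMul Aᵐᵒᵖ E] [Norm A] [Norm E]
    extends Inner A E where
  inner_add_right {x} {y} {z} : inner x (y + z) = inner x y + inner x z
  inner_self_nonneg {x} : 0 ≤ inner x x
  inner_self {x} : inner x x = 0 ↔ x = 0
  inner_op_smul_right {a : A} {x y : E} : inner x (y <• a) = inner x y * a
  inner_smul_right_complex {z : ℂ} {x} {y} : inner x (z • y) = z • inner x y
  star_inner x y : star (inner x y) = inner y x
  norm_eq_sqrt_norm_inner_self x : ‖x‖ = √‖inner x x‖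

variable {A : Type*} [CStarAlgebra A] [PartialOrder A] [StarOrderedRing A]
variable {H : Type*} [NormedAddCommGroup H] [NormedSpace ℂ H] [CompleteSpace H]
  [SMul Aᵐᵒᵖ H] [CStarModuleRight A H]

/-- `S` is the adjoint of `T` with respect to the `A`-valued inner product. -/
def IsAdjointOf (T S : H →L[ℂ] H) : Prop :=
  ∀ x y : H, inner A (T x) y = inner A x (S y)

/-- `C` belongs to `GL⁺(H)` : invertible (with adjointable inverse), self-adjoint
and positive with respect to the `A`-valued inner product. -/
def MemGLPlus (C : H →L[ℂ] H) : Prop :=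
  (∃ Ci : H →L[ℂ] H, Ci.comp C = ContinuousLinearMap.id ℂ H ∧
      C.comp Ci = ContinuousLinearMap.id ℂ H) ∧
  (∀ x y : H, inner A (C x) y = inner A x (C y)) ∧
  (∀ x : H, (0 : A) ≤ inner A x (C x))

namespace CStarModuleRight

attribute [simp] CStarModuleRight.inner_add_right CStarModuleRight.star_inner
  CStarModuleRight.inner_op_smul_right CStarModuleRight.inner_smul_right_complex

section helpers

local notation "⟪" x ", " y "⟫" => inner A x y

@[simp]
lemma inner_add_left {x y z : H} : ⟪x + y, z⟫ = ⟪x, z⟫ + ⟪y, z⟫ := by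
  rw [← star_star (r := ⟪x + y, z⟫)]
  simp only [inner_add_right, star_add, star_inner]

@[simp]
lemma inner_op_smul_left {a : A} {x y : H} : ⟪x <• a, y⟫ = star a * ⟪x, y⟫ := by
  rw [← star_inner]; simp

@[simp]
lemma inner_smul_left_complex {z : ℂ} {x y : H} : ⟪z • x, y⟫ = star z • ⟪x, y⟫ := by
  rw [← star_inner]
  simp

@[simp]
lemma inner_smul_left_real {z : ℝ} {x y : H} : ⟪z • x, y⟫ = z • ⟪x, y⟫ := by
  have h₁ : z • x = (z : ℂ) • x := by simp
  rw [h₁, ← star_inner, inner_smul_right_complex]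
  simp

@[simp]
lemma inner_smul_right_real {z : ℝ} {x y : H} : ⟪x, z • y⟫ = z • ⟪x, y⟫ := by
  have h₁ : z • y = (z : ℂ) • y := by simp
  rw [h₁, ← star_inner, inner_smul_left_complex]
  simp

variable (A) in
def innerSesq : H →ₗ⋆[ℂ] H →ₗ[ℂ] A where
  toFun x := { toFun := fun y => ⟪x, y⟫
               map_add' := fun z y => by simp
               map_smul' := fun z y => by simp }
  map_add' z y := by ext; simp
  map_smul' z y := by ext; simp

lemma innerSesq_apply {x y : H} : innerSesq A x y = ⟪x, y⟫ := rfl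

@[simp] lemma inner_zero_right {x : H} : ⟪x, 0⟫ = 0 := by simp [← innerSesq_apply]
@[simp] lemma inner_zero_left {x : H} : ⟪0, x⟫ = 0 := by simp [← innerSesq_apply]
@[simp] lemma inner_neg_right {x y : H} : ⟪x, -y⟫ = -⟪x, y⟫ := by simp [← innerSesq_apply]
@[simp] lemma inner_neg_left {x y : H} : ⟪-x, y⟫ = -⟪x, y⟫ := by simp [← innerSesq_apply]
@[simp] lemma inner_sub_right {x y z : H} : ⟪x, y - z⟫ = ⟪x, y⟫ - ⟪x, z⟫ := by
  simp [← innerSesq_apply]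
@[simp] lemma inner_sub_left {x y z : H} : ⟪x - y, z⟫ = ⟪x, z⟫ - ⟪y, z⟫ := by
  simp [← innerSesq_apply]

variable (A) in
lemma norm_sq_eq {x : H} : ‖x‖ ^ 2 = ‖⟪x, x⟫‖ := by
  simp [norm_eq_sqrt_norm_inner_self (A := A)]

lemma inner_mul_inner_swap_le {x y : H} : ⟪y, x⟫ * ⟪x, y⟫ ≤ ‖x‖ ^ 2 • ⟪y, y⟫ := by
  rcases eq_or_ne x 0 with h | h
  · simp [h]
  · have h₁ : ∀ (a : A),
        (0 : A) ≤ ‖x‖ ^ 2 • (star a * a) - ‖x‖ ^ 2 • (star a * ⟪x, y⟫)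
                  - ‖x‖ ^ 2 • (⟪y, x⟫ * a) + ‖x‖ ^ 2 • (‖x‖ ^ 2 • ⟪y, y⟫) := fun a => by
      calc (0 : A) ≤ ⟪x <• a - ‖x‖ ^ 2 • y, x <• a - ‖x‖ ^ 2 • y⟫ := by
                      exact inner_self_nonneg
            _ = star a * ⟪x, x⟫ * a - ‖x‖ ^ 2 • (star a * ⟪x, y⟫)
                  - ‖x‖ ^ 2 • (⟪y, x⟫ * a) + ‖x‖ ^ 2 • (‖x‖ ^ 2 • ⟪y, y⟫) := by
                      simp only [inner_sub_right, inner_op_smul_right, inner_sub_left,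
                        inner_op_smul_left, inner_smul_left_real, mul_sub, mul_smul_comm,
                        smul_mul_assoc, inner_smul_right_real, smul_sub, mul_assoc, sub_mul]
                      abel
            _ ≤ ‖x‖ ^ 2 • (star a * a) - ‖x‖ ^ 2 • (star a * ⟪x, y⟫)
                  - ‖x‖ ^ 2 • (⟪y, x⟫ * a) + ‖x‖ ^ 2 • (‖x‖ ^ 2 • ⟪y, y⟫) := by
                      gcongr
                      calc _ ≤ ‖⟪x, x⟫‖ • (star a * a) :=
                          CStarAlgebra.star_left_conjugate_le_norm_smul (star_inner x x)
                        _ = ‖x‖ ^ 2 • (star a * a) := by rw [norm_sq_eq A]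
    specialize h₁ ⟪x, y⟫
    simp only [star_inner, sub_self, zero_sub, le_neg_add_iff_add_le, add_zero] at h₁
    rwa [smul_le_smul_iff_of_pos_left (pow_pos (norm_pos_iff.mpr h) _)] at h₁

variable (H) in
lemma norm_inner_le {x y : H} : ‖⟪x, y⟫‖ ≤ ‖x‖ * ‖y‖ := by
  have := calc ‖⟪x, y⟫‖ ^ 2 = ‖⟪y, x⟫ * ⟪x, y⟫‖ := by
                rw [← star_inner x y, CStarRing.norm_star_mul_self, pow_two]
    _ ≤ ‖‖x‖ ^ 2 • ⟪y, y⟫‖ := by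
                refine CStarAlgebra.norm_le_norm_of_nonneg_of_le ?_ inner_mul_inner_swap_le
                rw [← star_inner x y]
                exact star_mul_self_nonneg ⟪x, y⟫
    _ = ‖x‖ ^ 2 * ‖⟪y, y⟫‖ := by simp [norm_smul]
    _ = ‖x‖ ^ 2 * ‖y‖ ^ 2 := by rw [norm_sq_eq A (x := y)]
    _ = (‖x‖ * ‖y‖) ^ 2 := by simp only [mul_pow]
  refine (pow_le_pow_iff_left₀ (norm_nonneg _) ?_ (by simp)).mp this
  exact mul_nonneg (norm_nonneg _) (norm_nonneg _)

variable (A) in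
noncomputable def innerSL : H →L⋆[ℂ] H →L[ℂ] A :=
  LinearMap.mkContinuous₂ (innerSesq A : H →ₗ⋆[ℂ] H →ₗ[ℂ] A) 1 <| fun x y => by
    simp [innerSesq_apply, norm_inner_le H]

lemma innerSL_apply {x y : H} : innerSL A x y = ⟪x, y⟫ := rfl

variable (A) in
lemma continuous_inner : Continuous (fun x : H × H => ⟪x.1, x.2⟫) := by
  simp_rw [← innerSL_apply]
  fun_prop

end helpers

end CStarModuleRight

namespace Stmt12Aux

local notation "⟪" x ", " y "⟫" => inner A x y

lemma ext_inner_left {u v : H} (h : ∀ z : H, ⟪z, u⟫ = ⟪z, v⟫) : u = v := by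
  have h1 : ⟪u - v, u - v⟫ = 0 := by
    have := h (u - v)
    simp only [CStarModuleRight.inner_sub_right]
    rw [this]; abel
  exact sub_eq_zero.mp (CStarModuleRight.inner_self.mp h1)

variable (A H) in
/-- The subring of `(H →L[ℂ] H) × (H →L[ℂ] H)ᵐᵒᵖ` consisting of adjoint pairs. -/
def adjRing : Subring ((H →L[ℂ] H) × (H →L[ℂ] H)ᵐᵒᵖ) where
  carrier := {p | ∀ x y : H, ⟪p.1 x, y⟫ = ⟪x, p.2.unop y⟫}
  zero_mem' := by intro x y; simp
  one_mem' := by intro x y; simp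
  add_mem' {p q} hp hq := by
    intro x y
    simp only [Prod.fst_add, Prod.snd_add, ContinuousLinearMap.add_apply,
      MulOpposite.unop_add, CStarModuleRight.inner_add_left, CStarModuleRight.inner_add_right,
      hp x y, hq x y]
  neg_mem' {p} hp := by
    intro x y
    simp only [Prod.fst_neg, Prod.snd_neg, ContinuousLinearMap.neg_apply,
      MulOpposite.unop_neg, CStarModuleRight.inner_neg_left, CStarModuleRight.inner_neg_right, hp x y]
  mul_mem' {p q} hp hq := by
    intro x y
    simp only [Prod.fst_mul, Prod.snd_mul, ContinuousLinearMap.mul_apply,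
      MulOpposite.unop_mul]
    rw [hp, hq]

variable (A H) in
/-- The C⋆-algebra of adjointable operators, as adjoint pairs. -/
abbrev AdjOp := adjRing A H

namespace AdjOp

noncomputable instance : NormedRing (AdjOp A H) := SubringClass.toNormedRing _

lemma adj_spec (p : AdjOp A H) : ∀ x y : H, ⟪p.val.1 x, y⟫ = ⟪x, p.val.2.unop y⟫ :=
  p.2

lemma adj_spec' (p : AdjOp A H) : ∀ x y : H, ⟪p.val.2.unop x, y⟫ = ⟪x, p.val.1 y⟫ := by
  intro x y
  have := congrArg star (p.2 y x)
  simpa using this.symm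

lemma ext_iff' {p q : AdjOp A H} : p = q ↔ p.val.1 = q.val.1 := by
  constructor
  · rintro rfl; rfl
  · intro h
    have h2 : p.val.2 = q.val.2 := by
      rw [MulOpposite.unop_injective.eq_iff.symm]
      ext y
      refine ext_inner_left (A := A) fun z => ?_
      rw [← adj_spec p z y, ← adj_spec q z y, h]
    exact Subtype.ext (Prod.ext h h2)


lemma norm_val_fst_apply_sq (p : AdjOp A H) (x : H) :
    ‖p.val.1 x‖ ^ 2 = ‖⟪x, p.val.2.unop (p.val.1 x)⟫‖ := by
  rw [CStarModuleRight.norm_sq_eq (A := A), adj_spec p x (p.val.1 x)]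

lemma norm_snd_le (p : AdjOp A H) : ‖p.val.2.unop‖ ≤ ‖p.val.1‖ := by
  refine ContinuousLinearMap.opNorm_le_bound _ (norm_nonneg _) fun x => ?_
  have h1 : ‖p.val.2.unop x‖ ^ 2 = ‖⟪p.val.1 (p.val.2.unop x), x⟫‖ := by
    rw [CStarModuleRight.norm_sq_eq (A := A)]
    congr 1
    exact (adj_spec p (p.val.2.unop x) x).symm
  have h2 : ‖⟪p.val.1 (p.val.2.unop x), x⟫‖ ≤ ‖p.val.1‖ * ‖p.val.2.unop x‖ * ‖x‖ := by
    refine (CStarModuleRight.norm_inner_le H).trans ?_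
    gcongr
    exact (p.val.1.le_opNorm _)
  rcases le_or_gt ‖p.val.2.unop x‖ 0 with h | h
  · exact le_trans h (by positivity)
  · have := h1.le.trans h2
    rw [pow_two] at this
    calc ‖p.val.2.unop x‖ = ‖p.val.2.unop x‖ * ‖p.val.2.unop x‖ / ‖p.val.2.unop x‖ := by
          field_simp
      _ ≤ ‖p.val.1‖ * ‖p.val.2.unop x‖ * ‖x‖ / ‖p.val.2.unop x‖ := by gcongr
      _ = ‖p.val.1‖ * ‖x‖ := by field_simp

lemma norm_snd_eq (p : AdjOp A H) : ‖p.val.2.unop‖ = ‖p.val.1‖ := by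
  refine le_antisymm (norm_snd_le p) ?_
  have hs : (⟨(p.val.2.unop, MulOpposite.op p.val.1), adj_spec' p⟩ : AdjOp A H).val.2.unop
      = p.val.1 := rfl
  have := norm_snd_le (⟨(p.val.2.unop, MulOpposite.op p.val.1), adj_spec' p⟩ : AdjOp A H)
  simpa using this

lemma norm_def (p : AdjOp A H) : ‖p‖ = ‖p.val.1‖ := by
  show ‖p.val‖ = _
  rw [Prod.norm_def]
  show max ‖p.val.1‖ ‖p.val.2‖ = _
  have : ‖p.val.2‖ = ‖p.val.2.unop‖ := rfl
  rw [this, norm_snd_eq, max_self]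

instance : Star (AdjOp A H) where
  star p := ⟨(p.val.2.unop, MulOpposite.op p.val.1), adj_spec' p⟩

@[simp] lemma star_val_fst (p : AdjOp A H) : (star p).val.1 = p.val.2.unop := rfl
@[simp] lemma star_val_snd (p : AdjOp A H) : (star p).val.2 = MulOpposite.op p.val.1 := rfl

instance : StarRing (AdjOp A H) where
  star_involutive p := by rw [ext_iff']; rfl
  star_mul p q := by rw [ext_iff']; rfl
  star_add p q := by rw [ext_iff']; rfl

instance : SMul ℂ (AdjOp A H) where
  smul c p := ⟨(c • p.val.1, MulOpposite.op ((starRingEnd ℂ c) • p.val.2.unop)), by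
    intro x y
    simp only [ContinuousLinearMap.smul_apply]
    rw [CStarModuleRight.inner_smul_left_complex, adj_spec p x y,
      ← CStarModuleRight.inner_smul_right_complex]
    rfl⟩

@[simp] lemma smul_val_fst (c : ℂ) (p : AdjOp A H) : (c • p).val.1 = c • p.val.1 := rfl
@[simp] lemma smul_val_snd_unop (c : ℂ) (p : AdjOp A H) :
    (c • p).val.2.unop = (starRingEnd ℂ c) • p.val.2.unop := rfl

@[simp] lemma add_val_fst (p q : AdjOp A H) : (p + q).val.1 = p.val.1 + q.val.1 := rfl
@[simp] lemma mul_val_fst (p q : AdjOp A H) : (p * q).val.1 = p.val.1 * q.val.1 := rfl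
@[simp] lemma zero_val_fst : ((0 : AdjOp A H)).val.1 = 0 := rfl
@[simp] lemma one_val_fst : ((1 : AdjOp A H)).val.1 = 1 := rfl

instance : Module ℂ (AdjOp A H) where
  one_smul p := by rw [ext_iff']; show (1:ℂ) • p.val.1 = p.val.1; exact one_smul ℂ _
  mul_smul c d p := by
    rw [ext_iff']; show (c * d) • p.val.1 = c • d • p.val.1; exact mul_smul c d _
  smul_zero c := by rw [ext_iff']; show c • (0 : H →L[ℂ] H) = 0; exact smul_zero c
  smul_add c p q := by
    rw [ext_iff']; show c • (p.val.1 + q.val.1) = c • p.val.1 + c • q.val.1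
    exact smul_add c _ _
  add_smul c d p := by
    rw [ext_iff']; show (c + d) • p.val.1 = c • p.val.1 + d • p.val.1; exact add_smul c d _
  zero_smul p := by rw [ext_iff']; show (0:ℂ) • p.val.1 = 0; exact zero_smul ℂ _

noncomputable instance : Algebra ℂ (AdjOp A H) :=
  Algebra.ofModule
    (fun c p q => by
      rw [ext_iff']; show (c • p.val.1) * q.val.1 = c • (p.val.1 * q.val.1)
      exact smul_mul_assoc c _ _)
    (fun c p q => by
      rw [ext_iff']; show p.val.1 * (c • q.val.1) = c • (p.val.1 * q.val.1)
      exact (mul_smul_comm c _ _))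

noncomputable instance : NormedAlgebra ℂ (AdjOp A H) :=
  { (inferInstance : Algebra ℂ (AdjOp A H)) with
    norm_smul_le := fun c p => by
      rw [norm_def, norm_def, smul_val_fst]
      exact (norm_smul c p.val.1).le }

instance : StarModule ℂ (AdjOp A H) where
  star_smul c p := by
    rw [ext_iff']
    show (starRingEnd ℂ c) • p.val.2.unop = (star c) • p.val.2.unop
    rfl


lemma norm_fst_sq_le (p : AdjOp A H) : ‖p.val.1‖ ^ 2 ≤ ‖p.val.2.unop * p.val.1‖ := by
  have key : ∀ x : H, ‖p.val.1 x‖ ≤ Real.sqrt ‖p.val.2.unop * p.val.1‖ * ‖x‖ := by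
    intro x
    have h1 : ‖p.val.1 x‖ ^ 2 = ‖⟪x, (p.val.2.unop * p.val.1) x⟫‖ :=
      norm_val_fst_apply_sq p x
    have h2 : ‖⟪x, (p.val.2.unop * p.val.1) x⟫‖ ≤ ‖x‖ * (‖p.val.2.unop * p.val.1‖ * ‖x‖) := by
      refine (CStarModuleRight.norm_inner_le H).trans ?_
      gcongr
      exact ContinuousLinearMap.le_opNorm _ _
    have h3 : ‖p.val.1 x‖ ^ 2 ≤ (Real.sqrt ‖p.val.2.unop * p.val.1‖ * ‖x‖) ^ 2 := by
      rw [h1, mul_pow, Real.sq_sqrt (norm_nonneg _)]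
      calc _ ≤ ‖x‖ * (‖p.val.2.unop * p.val.1‖ * ‖x‖) := h2
        _ = ‖p.val.2.unop * p.val.1‖ * ‖x‖ ^ 2 := by ring
    nlinarith [norm_nonneg (p.val.1 x), mul_nonneg (Real.sqrt_nonneg ‖p.val.2.unop * p.val.1‖)
      (norm_nonneg x)]
  have hb : ‖p.val.1‖ ≤ Real.sqrt ‖p.val.2.unop * p.val.1‖ :=
    ContinuousLinearMap.opNorm_le_bound _ (Real.sqrt_nonneg _) key
  calc ‖p.val.1‖ ^ 2 ≤ (Real.sqrt ‖p.val.2.unop * p.val.1‖) ^ 2 := by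
        have h0 : (0:ℝ) ≤ ‖p.val.1‖ := norm_nonneg _
        nlinarith [hb]
    _ = ‖p.val.2.unop * p.val.1‖ := Real.sq_sqrt (norm_nonneg _)

instance : CStarRing (AdjOp A H) where
  norm_mul_self_le p := by
    have h1 : ‖star p * p‖ = ‖p.val.2.unop * p.val.1‖ := by
      rw [norm_def]; rfl
    rw [h1, ← pow_two, norm_def]
    exact norm_fst_sq_le p

instance : CompleteSpace (AdjOp A H) := by
  have hcl : IsClosed ((adjRing A H : Set ((H →L[ℂ] H) × (H →L[ℂ] H)ᵐᵒᵖ))) := by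
    have : (adjRing A H : Set ((H →L[ℂ] H) × (H →L[ℂ] H)ᵐᵒᵖ)) =
        ⋂ (x : H), ⋂ (y : H),
          {p : (H →L[ℂ] H) × (H →L[ℂ] H)ᵐᵒᵖ | ⟪p.1 x, y⟫ = ⟪x, p.2.unop y⟫} := by
      ext p
      simp only [Set.mem_iInter, Set.mem_setOf_eq]
      rfl
    rw [this]
    refine isClosed_iInter fun x => isClosed_iInter fun y => isClosed_eq ?_ ?_
    · have c1 : Continuous fun p : (H →L[ℂ] H) × (H →L[ℂ] H)ᵐᵒᵖ => p.1 x :=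
        (ContinuousLinearMap.apply ℂ H x).continuous.comp continuous_fst
      have : Continuous fun z : H => ⟪z, y⟫ := by
        have := (CStarModuleRight.continuous_inner (A := A) (H := H)).comp
          (Continuous.prodMk (f := fun z : H => z) (g := fun _ : H => y)
            continuous_id continuous_const)
        exact this
      exact this.comp c1
    · have c1 : Continuous fun p : (H →L[ℂ] H) × (H →L[ℂ] H)ᵐᵒᵖ => p.2.unop y :=
        (ContinuousLinearMap.apply ℂ H y).continuous.comp
          (MulOpposite.continuous_unop.comp continuous_snd)
      exact ((CStarModuleRight.innerSL (A := A) x).continuous).comp c1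
  exact hcl.completeSpace_coe

noncomputable instance : CStarAlgebra (AdjOp A H) :=
  { (inferInstance : NormedRing (AdjOp A H)),
    (inferInstance : StarRing (AdjOp A H)),
    (inferInstance : CStarRing (AdjOp A H)),
    (inferInstance : NormedAlgebra ℂ (AdjOp A H)),
    (inferInstance : StarModule ℂ (AdjOp A H)),
    (inferInstance : CompleteSpace (AdjOp A H)) with }


end AdjOp

section CommuteCfc

variable {B : Type*} [CStarAlgebra B]

lemma commute_aeval {a b : B} (hab : Commute a b) (p : Polynomial ℝ) :
    Commute (Polynomial.aeval a p) b := by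
  induction p using Polynomial.induction_on' with
  | add f g hf hg => rw [map_add]; exact hf.add_left hg
  | monomial n c =>
    rw [Polynomial.aeval_monomial]
    have h1 : Commute ((algebraMap ℝ B) c) b := Algebra.commutes c b
    exact h1.mul_left (hab.pow_left n)

lemma commute_cfc_real {a : B} (ha : IsSelfAdjoint a) {b : B} (hab : Commute a b) (f : ℝ → ℝ) :
    Commute (cfc f a) b := by
  by_cases hf : ContinuousOn f (spectrum ℝ a)
  · rw [cfc_apply f a ha hf]
    have hS : IsClosed {h : C(spectrum ℝ a, ℝ) | Commute (cfcHom ha h) b} :=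
      isClosed_eq ((cfcHom_continuous ha).mul continuous_const)
        (continuous_const.mul (cfcHom_continuous ha))
    have hsubset : (polynomialFunctions (spectrum ℝ a) : Set C(spectrum ℝ a, ℝ)) ⊆
        {h | Commute (cfcHom ha h) b} := by
      rw [polynomialFunctions_coe]
      rintro h ⟨p, rfl⟩
      have hkey : cfcHom ha (Polynomial.toContinuousMapOnAlgHom (spectrum ℝ a) p) =
          Polynomial.aeval a p := by
        rw [← cfc_polynomial p a ha,
          cfc_apply (fun x => Polynomial.eval x p) a ha (Polynomial.continuous p).continuousOn]
        congr 1
      rw [Set.mem_setOf_eq, hkey]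
      exact commute_aeval hab p
    have hg : (⟨(spectrum ℝ a).restrict f, hf.restrict⟩ : C(spectrum ℝ a, ℝ)) ∈
        closure (polynomialFunctions (spectrum ℝ a) : Set C(spectrum ℝ a, ℝ)) := by
      rw [← Subalgebra.topologicalClosure_coe, polynomialFunctions.topologicalClosure]
      trivial
    exact closure_minimal hsubset hS hg
  · rw [cfc_apply_of_not_continuousOn a hf]; exact Commute.zero_left b

end CommuteCfc

namespace AdjOp

lemma sa_val {P : AdjOp A H} (hsa : IsSelfAdjoint P) : P.val.2.unop = P.val.1 := by
  have := congrArg (fun p : AdjOp A H => p.val.1) hsa.star_eq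
  exact this

lemma inner_sa_move {P : AdjOp A H} (hsa : IsSelfAdjoint P) (x y : H) :
    ⟪P.val.1 x, y⟫ = ⟪x, P.val.1 y⟫ := by
  rw [adj_spec P x y, sa_val hsa]

lemma inner_star_mul_self (W : AdjOp A H) (x : H) :
    ⟪x, (star W * W).val.1 x⟫ = ⟪W.val.1 x, W.val.1 x⟫ := by
  have h1 : (star W * W).val.1 x = W.val.2.unop (W.val.1 x) := rfl
  rw [h1, ← adj_spec W x (W.val.1 x)]

lemma exists_sqrt (P : AdjOp A H) (hsa : IsSelfAdjoint P)
    (hpos : ∀ x : H, (0:A) ≤ ⟪x, P.val.1 x⟫) :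
    ∃ D : AdjOp A H, IsSelfAdjoint D ∧ D * D = P ∧
      ∀ Q : AdjOp A H, Commute P Q → Commute D Q := by
  rcases subsingleton_or_nontrivial H with hH | hH
  · haveI : Subsingleton (AdjOp A H) :=
      ⟨fun p q => ext_iff'.mpr (ContinuousLinearMap.ext fun x => Subsingleton.elim _ _)⟩
    exact ⟨P, hsa, Subsingleton.elim _ _, fun Q _ => Subsingleton.elim _ _⟩
  haveI : Nontrivial (AdjOp A H) := by
    obtain ⟨x, hx⟩ := exists_ne (0 : H)
    refine nontrivial_of_ne 0 1 fun h01 => hx ?_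
    have := congrArg (fun p : AdjOp A H => p.val.1 x) h01
    simpa using this.symm
  set h : ℝ → ℝ := fun t => max (-t) 0 with hh_def
  have hh : Continuous h := by fun_prop
  have hfc : Continuous fun t => h t * Real.sqrt (h t) := by fun_prop
  set r := cfc (fun t => h t * Real.sqrt (h t)) P with hr_def
  have hrsa : IsSelfAdjoint r := cfc_predicate _ P
  set q := cfc h P with hq_def
  have hqsa : IsSelfAdjoint q := cfc_predicate _ P
  have key : r * r = -(q * P * q) := by
    rw [hr_def, ← cfc_mul _ _ P hfc.continuousOn hfc.continuousOn]
    have h2 : q * P * q = cfc (fun t => h t * t * h t) P := by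
      rw [cfc_mul _ _ P (by fun_prop) hh.continuousOn,
        cfc_mul _ _ P hh.continuousOn (by fun_prop), hq_def, cfc_id' ℝ P hsa]
    have h3 : -(q * P * q) = cfc (fun t => -(h t * t * h t)) P := by
      rw [h2, cfc_neg]
    rw [h3]
    refine cfc_congr fun t _ => ?_
    rcases le_total t 0 with ht | ht
    · have hht : h t = -t := max_eq_left (by linarith)
      rw [hht]
      have h9 : Real.sqrt (-t) * Real.sqrt (-t) = -t := Real.mul_self_sqrt (by linarith)
      have h10 : -t * Real.sqrt (-t) * (-t * Real.sqrt (-t))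
          = (Real.sqrt (-t) * Real.sqrt (-t)) * (t * t) := by ring
      rw [h10, h9]; ring
    · have hht : h t = 0 := max_eq_right (by linarith)
      rw [hht]; simp
  have hr0 : r = 0 := by
    have hz : ∀ x : H, inner A (r.val.1 x) (r.val.1 x) = 0 := by
      intro x
      have h1 : ⟪x, (r*r).val.1 x⟫ = ⟪r.val.1 x, r.val.1 x⟫ := by
        have h0 := inner_star_mul_self r x
        rwa [hrsa.star_eq] at h0
      have h2 : ⟪x, (q*P*q).val.1 x⟫ = ⟪q.val.1 x, P.val.1 (q.val.1 x)⟫ := by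
        have e1 : (q*P*q).val.1 x = q.val.1 (P.val.1 (q.val.1 x)) := rfl
        rw [e1, ← inner_sa_move hqsa x (P.val.1 (q.val.1 x))]
      have h3 : (0:A) ≤ ⟪x, (q*P*q).val.1 x⟫ := by rw [h2]; exact hpos (q.val.1 x)
      have h4 : ⟪x, (r*r).val.1 x⟫ = -⟪x, (q*P*q).val.1 x⟫ := by
        rw [key]
        have e2 : (-(q*P*q)).val.1 x = -((q*P*q).val.1 x) := rfl
        rw [e2, CStarModuleRight.inner_neg_right]
      have h5 : (0:A) ≤ ⟪r.val.1 x, r.val.1 x⟫ := CStarModuleRight.inner_self_nonneg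
      have h6 : ⟪r.val.1 x, r.val.1 x⟫ ≤ 0 := by
        rw [← h1, h4]; exact neg_nonpos.mpr h3
      exact le_antisymm h6 h5
    rw [ext_iff']
    show r.val.1 = (0 : AdjOp A H).val.1
    rw [zero_val_fst]
    exact ContinuousLinearMap.ext fun x => CStarModuleRight.inner_self.mp (hz x)
  have hspec : ∀ t ∈ spectrum ℝ P, 0 ≤ t := by
    intro t ht
    by_contra hlt
    push_neg at hlt
    have himg := cfc_map_spectrum (fun t => h t * Real.sqrt (h t)) P hsa hfc.continuousOn
    rw [← hr_def, hr0, spectrum.zero_eq] at himg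
    have hmem : h t * Real.sqrt (h t) ∈ ({0} : Set ℝ) := by
      rw [himg]; exact Set.mem_image_of_mem _ ht
    have hht : h t = -t := max_eq_left (by linarith)
    have hpos' : 0 < h t * Real.sqrt (h t) := by
      have : 0 < h t := by rw [hht]; linarith
      exact mul_pos this (Real.sqrt_pos.mpr this)
    simp only [Set.mem_singleton_iff] at hmem
    linarith [hmem ▸ hpos']
  refine ⟨cfc Real.sqrt P, cfc_predicate _ P, ?_, fun Q hQ => commute_cfc_real hsa hQ Real.sqrt⟩
  rw [← cfc_mul _ _ P Real.continuous_sqrt.continuousOn Real.continuous_sqrt.continuousOn]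
  have h7 : cfc (fun t => Real.sqrt t * Real.sqrt t) P = cfc (fun t : ℝ => t) P :=
    cfc_congr fun t ht => Real.mul_self_sqrt (hspec t ht)
  rw [h7, cfc_id' ℝ P hsa]

end AdjOp

end Stmt12Aux

open Stmt12Aux Stmt12Aux.AdjOp

local notation "⟪" x ", " y "⟫" => inner A x y

/-- the frame operator `S x = Σ_i C' T_i* T_i C x` of a
`(C,C')`-controlled Bessel `K`-operator sequence is positive, bounded and
self-adjoint. -/
theorem stmt_12 {ι : Type*} (C C' : H →L[ℂ] H) (T Ts : ι → H →L[ℂ] H) (S : H → H)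
    (hC : MemGLPlus (A := A) C) (hC' : MemGLPlus (A := A) C')
    (hT : ∀ i, IsAdjointOf (A := A) (T i) (Ts i))
    (hCC' : C.comp C' = C'.comp C)
    (hCTT : ∀ i, C.comp ((Ts i).comp (T i)) = ((Ts i).comp (T i)).comp C)
    (hC'TT : ∀ i, C'.comp ((Ts i).comp (T i)) = ((Ts i).comp (T i)).comp C')
    (b : ℝ) (hb : 0 < b)
    (hBessel : ∀ x : H,
      ∑' i, inner A (T i (C x)) (T i (C' x)) ≤ b • inner A x x)
    (hS : ∀ x : H, HasSum (fun i => C' (Ts i (T i (C x)))) (S x)) :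
    (∀ x y : H, inner A (S x) y = inner A x (S y)) ∧
    (∀ x : H, (0 : A) ≤ inner A x (S x)) ∧
    (∃ M : ℝ, ∀ x : H, ‖S x‖ ≤ M * ‖x‖) := by
  classical
  -- package the operators as adjointable pairs
  let cC : AdjOp A H := ⟨(C, .op C), hC.2.1⟩
  let cC' : AdjOp A H := ⟨(C', .op C'), hC'.2.1⟩
  let cT : ι → AdjOp A H := fun i => ⟨(T i, .op (Ts i)), hT i⟩
  let cP : ι → AdjOp A H := fun i => star (cT i) * cT i
  have hcCsa : IsSelfAdjoint cC := ext_iff'.mpr rfl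
  have hcC'sa : IsSelfAdjoint cC' := ext_iff'.mpr rfl
  have hcPsa : ∀ i, IsSelfAdjoint (cP i) := fun i => IsSelfAdjoint.star_mul_self (cT i)
  have hcPval : ∀ i, (cP i).val.1 = (Ts i).comp (T i) := fun i => rfl
  have hcomm_CC' : Commute cC cC' := by
    rw [Commute, SemiconjBy, ext_iff']
    show C.comp C' = C'.comp C
    exact hCC'
  have hcomm_CP : ∀ i, Commute cC (cP i) := by
    intro i
    rw [Commute, SemiconjBy, ext_iff']
    show C.comp ((Ts i).comp (T i)) = ((Ts i).comp (T i)).comp C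
    exact hCTT i
  have hcomm_C'P : ∀ i, Commute cC' (cP i) := by
    intro i
    rw [Commute, SemiconjBy, ext_iff']
    show C'.comp ((Ts i).comp (T i)) = ((Ts i).comp (T i)).comp C'
    exact hC'TT i
  -- square roots
  obtain ⟨D, hDsa, hDD, hDcomm⟩ := exists_sqrt cC hcCsa hC.2.2
  obtain ⟨D', hD'sa, hD'D', hD'comm⟩ := exists_sqrt cC' hcC'sa hC'.2.2
  have hDC' : Commute D cC' := hDcomm cC' hcomm_CC'
  have hDD' : Commute D D' := (hD'comm D hDC'.symm).symm
  let E : AdjOp A H := D * D'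
  have hEsa : IsSelfAdjoint E := by
    show star (D * D') = D * D'
    rw [star_mul, hDsa.star_eq, hD'sa.star_eq]
    exact hDD'.symm.eq
  have hEE : E * E = cC * cC' := by
    show D * D' * (D * D') = cC * cC'
    rw [mul_assoc, ← mul_assoc D' D, hDD'.symm.eq, mul_assoc, ← mul_assoc, hDD, hD'D']
  have hEcomm : ∀ i, Commute E (cP i) := fun i =>
    (hDcomm (cP i) (hcomm_CP i)).mul_left (hD'comm (cP i) (hcomm_C'P i))
  -- the summand operators
  let Q : ι → AdjOp A H := fun i => cC' * cP i * cC
  have hQalt : ∀ i, cC * cP i * cC' = Q i := by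
    intro i
    show cC * cP i * cC' = cC' * cP i * cC
    rw [(hcomm_CP i).eq, mul_assoc, hcomm_CC'.eq, ← mul_assoc, ← (hcomm_C'P i).eq]
  have hQkey : ∀ i, Q i = star (cT i * E) * (cT i * E) := by
    intro i
    rw [star_mul, hEsa.star_eq]
    calc Q i = cC * cP i * cC' := (hQalt i).symm
      _ = cP i * (cC * cC') := by rw [(hcomm_CP i).eq, mul_assoc]
      _ = cP i * (E * E) := by rw [hEE]
      _ = E * cP i * E := by rw [← mul_assoc, ← (hEcomm i).eq]
      _ = E * star (cT i) * (cT i * E) := by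
          show E * (star (cT i) * cT i) * E = E * star (cT i) * (cT i * E)
          rw [← mul_assoc E (star (cT i)) (cT i), mul_assoc (E * star (cT i)) (cT i) E]
  have hQsa : ∀ i, IsSelfAdjoint (Q i) := by
    intro i
    show star (cC' * cP i * cC) = Q i
    rw [star_mul, star_mul, hcCsa.star_eq, hcC'sa.star_eq, (hcPsa i).star_eq, ← mul_assoc]
    exact hQalt i
  have hQ1 : ∀ i (x : H), (Q i).val.1 x = C' (Ts i (T i (C x))) := fun i x => rfl
  have hQpos : ∀ i (x : H), (0:A) ≤ ⟪x, (Q i).val.1 x⟫ := by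
    intro i x
    rw [hQkey i, inner_star_mul_self]
    exact CStarModuleRight.inner_self_nonneg
  have hQmove : ∀ i (x y : H), ⟪(Q i).val.1 x, y⟫ = ⟪x, (Q i).val.1 y⟫ :=
    fun i => inner_sa_move (hQsa i)
  have hBesselTerm : ∀ i (x : H), ⟪T i (C x), T i (C' x)⟫ = ⟪x, (Q i).val.1 x⟫ := by
    intro i x
    have e1 : ⟪T i (C x), T i (C' x)⟫ = ⟪C x, Ts i (T i (C' x))⟫ := hT i (C x) _
    have e2 : ⟪C x, Ts i (T i (C' x))⟫ = ⟪x, C (Ts i (T i (C' x)))⟫ := hC.2.1 x _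
    have e3 : C (Ts i (T i (C' x))) = (cC * cP i * cC').val.1 x := rfl
    rw [e1, e2, e3, hQalt i]
  -- sums
  have hSum : ∀ x : H, HasSum (fun i => (Q i).val.1 x) (S x) := fun x => hS x
  have hInnerSum : ∀ x y : H, HasSum (fun i => ⟪y, (Q i).val.1 x⟫) ⟪y, S x⟫ :=
    fun x y => (CStarModuleRight.innerSL (A := A) y).hasSum (hSum x)
  -- part 1 : self-adjointness
  have hsa2 : ∀ x y : H, ⟪S x, y⟫ = ⟪x, S y⟫ := by
    intro x y
    have h1 : HasSum (fun i => star ⟪y, (Q i).val.1 x⟫) (star ⟪y, S x⟫) :=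
      (hInnerSum x y).star
    have h2 : (fun i => star ⟪y, (Q i).val.1 x⟫) = fun i => ⟪x, (Q i).val.1 y⟫ := by
      funext i
      rw [CStarModuleRight.star_inner, hQmove i]
    rw [h2] at h1
    have h3 := h1.unique (hInnerSum y x)
    rw [← CStarModuleRight.star_inner y (S x), h3]
  -- part 2 : positivity
  have hpos2 : ∀ x : H, (0:A) ≤ ⟪x, S x⟫ := by
    intro x
    exact hasSum_le (fun i => hQpos i x) hasSum_zero (hInnerSum x x)
  refine ⟨hsa2, hpos2, ⟨b, ?_⟩⟩
  -- part 3 : boundedness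
  have hBesselS : ∀ x : H, ⟪x, S x⟫ ≤ b • ⟪x, x⟫ := by
    intro x
    have ht : ∑' i, ⟪T i (C x), T i (C' x)⟫ = ⟪x, S x⟫ := by
      rw [tsum_congr (fun i => hBesselTerm i x)]
      exact (hInnerSum x x).tsum_eq
    rw [← ht]
    exact hBessel x
  have hadd : ∀ u v : H, S (u + v) = S u + S v := by
    intro u v
    refine (hS (u + v)).unique ?_
    have := (hS u).add (hS v)
    convert this using 2 with i
    simp [map_add]
  have hsmulC : ∀ (t : ℂ) (u : H), S (t • u) = t • S u := by
    intro t u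
    refine (hS (t • u)).unique ?_
    have := (hS u).const_smul t
    convert this using 2 with i
    simp [map_smul]
  have hsmulR : ∀ (t : ℝ) (u : H), S (t • u) = t • S u := by
    intro t u
    have h1 : t • u = (t : ℂ) • u := (Complex.coe_smul t u).symm
    have h2 : t • S u = (t : ℂ) • S u := (Complex.coe_smul t (S u)).symm
    rw [h1, h2, hsmulC]
  have hS0 : S 0 = 0 := by
    have h := hadd 0 0
    rw [add_zero] at h
    exact left_eq_add.mp h
  intro y
  by_cases hy0 : S y = 0
  · rw [hy0, norm_zero]
    positivity
  have hyne : y ≠ 0 := fun h => hy0 (by rw [h, hS0])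
  set z : H := S y with hz
  set t : ℝ := ‖y‖ / ‖z‖ with htdef
  have hzpos : 0 < ‖z‖ := norm_pos_iff.mpr hy0
  have hypos : 0 < ‖y‖ := norm_pos_iff.mpr hyne
  have htpos : 0 < t := div_pos hypos hzpos
  set u : H := t • z + y with hu
  set w : H := t • z - y with hw
  have hSu : S u = t • S z + z := by rw [hu, hadd, hsmulR, ← hz]
  have hSw : S w = t • S z - z := by
    rw [hw, sub_eq_add_neg, hadd, hsmulR]
    have : S (-y) = -S y := by
      have h1 : (-1 : ℂ) • y = -y := by simp
      have := hsmulC (-1) y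
      rw [h1] at this
      simpa using this
    rw [this, ← hz, sub_eq_add_neg]
  have hyz : ⟪y, S z⟫ = ⟪z, z⟫ := by rw [← hsa2 y z, hz]
  have hdiff : ⟪u, S u⟫ - ⟪w, S w⟫ = (4 * t) • ⟪z, z⟫ := by
    rw [hSu, hSw, hu, hw]
    simp only [CStarModuleRight.inner_add_left, CStarModuleRight.inner_add_right,
      CStarModuleRight.inner_sub_left, CStarModuleRight.inner_sub_right,
      CStarModuleRight.inner_smul_left_real, CStarModuleRight.inner_smul_right_real, hyz]
    module
  have hle : (4 * t) • ⟪z, z⟫ ≤ b • ⟪u, u⟫ := by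
    rw [← hdiff]
    calc ⟪u, S u⟫ - ⟪w, S w⟫ ≤ ⟪u, S u⟫ := sub_le_self _ (hpos2 w)
      _ ≤ b • ⟪u, u⟫ := hBesselS u
  have hnorm : (4 * t) * ‖z‖ ^ 2 ≤ b * ‖u‖ ^ 2 := by
    have h1 : ‖(4 * t) • ⟪z, z⟫‖ ≤ ‖b • ⟪u, u⟫‖ := by
      refine CStarAlgebra.norm_le_norm_of_nonneg_of_le ?_ hle
      exact smul_nonneg (by positivity) CStarModuleRight.inner_self_nonneg
    rw [norm_smul, norm_smul, Real.norm_eq_abs, Real.norm_eq_abs,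
      abs_of_pos (by positivity : (0:ℝ) < 4 * t), abs_of_pos hb,
      ← CStarModuleRight.norm_sq_eq (A := A), ← CStarModuleRight.norm_sq_eq (A := A)] at h1
    exact h1
  have hunorm : ‖u‖ ≤ 2 * ‖y‖ := by
    calc ‖u‖ ≤ ‖t • z‖ + ‖y‖ := norm_add_le _ _
      _ = t * ‖z‖ + ‖y‖ := by rw [norm_smul, Real.norm_eq_abs, abs_of_pos htpos]
      _ = ‖y‖ + ‖y‖ := by rw [htdef, div_mul_cancel₀ _ (ne_of_gt hzpos)]
      _ = 2 * ‖y‖ := by ring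
  have h4 : (4 * t) * ‖z‖ ^ 2 = 4 * (‖y‖ * ‖z‖) := by
    rw [htdef]
    field_simp
  have h5 : b * ‖u‖ ^ 2 ≤ b * (2 * ‖y‖) ^ 2 := by
    have h50 : ‖u‖ ^ 2 ≤ (2 * ‖y‖) ^ 2 := by nlinarith [norm_nonneg u]
    nlinarith
  rw [h4] at hnorm
  have h6 : 4 * (‖y‖ * ‖z‖) ≤ 4 * b * ‖y‖ ^ 2 := by nlinarith
  nlinarith
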